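/- Let n ≥ 1 and let A be an n×n real matrix with nonnegative entries that is irreducible (for all i, j there exists m ≥ 1 with (A^m)_{ij} > 0; equivalently, the weighted digraph of A is strongly connected), and let β, δ > 0 satisfy β·ρ(A) > δ, where ρ(A) is the spectral radius of A. Then there exists a unique vector x* with 0 < x*_i < 1 for every i satisfying the endemic equilibrium equations δ x*_i = (1 − x*_i) β Σ_{j=1}^n A_{ji} x*_j for all i. -/

import Mathlib

open Finset Matrix


private lemma SIS_g_mono' {β δ t u : ℝ} (hβ : 0 < β) (hδ : 0 < δ) (ht : 0 ≤ t) (htu : t ≤ u) :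
    β * t / (δ + β * t) ≤ β * u / (δ + β * u) := by
  have h1 : 0 < δ + β * t := by nlinarith
  have h2 : 0 < δ + β * u := by nlinarith
  rw [div_le_div_iff₀ h1 h2]
  nlinarith [mul_le_mul_of_nonneg_left htu (by positivity : (0:ℝ) ≤ β * δ)]

private lemma SIS_g_scale' {β δ t κ : ℝ} (hβ : 0 < β) (hδ : 0 < δ) (ht : 0 < t) (hκ : 1 < κ) :
    β * (κ * t) / (δ + β * (κ * t)) < κ * (β * t / (δ + β * t)) := by
  have hκ0 : 0 < κ := lt_trans one_pos hκ
  have h1 : 0 < δ + β * t := by nlinarith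
  have h2 : 0 < δ + β * (κ * t) := by nlinarith [mul_pos hβ (mul_pos hκ0 ht)]
  rw [mul_div_assoc'] at *
  rw [div_lt_div_iff₀ h2 h1]
  have key : 0 < κ * (β * β * (t * t)) * (κ - 1) := mul_pos (by positivity) (sub_pos.mpr hκ)
  nlinarith [key]

private lemma SIS_eq_iff' {β δ x s : ℝ} (hβ : 0 < β) (hδ : 0 < δ) (hs : 0 ≤ s) :
    δ * x = (1 - x) * β * s ↔ x = β * s / (δ + β * s) := by
  have h1 : 0 < δ + β * s := by nlinarith
  rw [eq_div_iff h1.ne']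
  constructor <;> intro h <;> nlinarith [h]

private lemma SIS_le' (n : ℕ) (hn : 1 ≤ n) (A : Matrix (Fin n) (Fin n) ℝ)
    (hA : ∀ i j, 0 ≤ A i j) (β δ : ℝ) (hβ : 0 < β) (hδ : 0 < δ)
    (x y : Fin n → ℝ)
    (hx1 : ∀ i, x i ∈ Set.Ioo (0:ℝ) 1)
    (hx2 : ∀ i, δ * x i = (1 - x i) * β * ∑ j, A j i * x j)
    (hy1 : ∀ i, y i ∈ Set.Ioo (0:ℝ) 1)
    (hy2 : ∀ i, δ * y i = (1 - y i) * β * ∑ j, A j i * y j) :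
    ∀ i, x i ≤ y i := by
  by_contra hcon
  push_neg at hcon
  obtain ⟨i1, hi1⟩ := hcon
  have hne : (Finset.univ : Finset (Fin n)).Nonempty := ⟨⟨0, hn⟩, Finset.mem_univ _⟩
  obtain ⟨i0, -, hmax⟩ := Finset.exists_max_image Finset.univ (fun i => x i / y i) hne
  set κ := x i0 / y i0 with hκdef
  have hyi0 : 0 < y i0 := (hy1 i0).1
  have hκ1 : 1 < κ := by
    have h1 : 1 < x i1 / y i1 := (one_lt_div (hy1 i1).1).mpr hi1
    exact lt_of_lt_of_le h1 (hmax i1 (Finset.mem_univ _))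
  have hκy : ∀ j, x j ≤ κ * y j := fun j =>
    (div_le_iff₀ (hy1 j).1).mp (hmax j (Finset.mem_univ _))
  set sx := ∑ j, A j i0 * x j with hsxdef
  set sy := ∑ j, A j i0 * y j with hsydef
  have hsy0 : 0 < sy := by
    have h := hy2 i0
    by_contra hs
    push_neg at hs
    have h1 : 0 < 1 - y i0 := by linarith [(hy1 i0).2]
    rw [← hsydef] at h
    have h2 : (1 - y i0) * β * sy ≤ 0 :=
      mul_nonpos_of_nonneg_of_nonpos (mul_pos h1 hβ).le hs
    nlinarith [mul_pos hδ hyi0]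
  have hsx0 : 0 ≤ sx := Finset.sum_nonneg fun j _ => mul_nonneg (hA j i0) (hx1 j).1.le
  have hsxκ : sx ≤ κ * sy := by
    rw [hsydef, Finset.mul_sum]
    refine Finset.sum_le_sum fun j _ => ?_
    calc A j i0 * x j ≤ A j i0 * (κ * y j) := mul_le_mul_of_nonneg_left (hκy j) (hA j i0)
      _ = κ * (A j i0 * y j) := by ring
  have hx0eq : x i0 = β * sx / (δ + β * sx) := (SIS_eq_iff' hβ hδ hsx0).mp (hx2 i0)
  have hy0eq : y i0 = β * sy / (δ + β * sy) := (SIS_eq_iff' hβ hδ hsy0.le).mp (hy2 i0)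
  have hchain : x i0 < κ * y i0 := by
    calc x i0 = β * sx / (δ + β * sx) := hx0eq
      _ ≤ β * (κ * sy) / (δ + β * (κ * sy)) := SIS_g_mono' hβ hδ hsx0 hsxκ
      _ < κ * (β * sy / (δ + β * sy)) := SIS_g_scale' hβ hδ hsy0 hκ1
      _ = κ * y i0 := by rw [← hy0eq]
  have : κ * y i0 = x i0 := by
    rw [hκdef]
    field_simp
  linarith

private lemma SIS_g_lt_one' {β δ t : ℝ} (hβ : 0 < β) (hδ : 0 < δ) (ht : 0 ≤ t) :
    β * t / (δ + β * t) < 1 := by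
  have h1 : 0 < δ + β * t := by nlinarith
  rw [div_lt_one h1]; nlinarith



private lemma SIS_amplify (n : ℕ) (A : Matrix (Fin n) (Fin n) ℝ)
    (hA : ∀ i j, 0 ≤ A i j)
    (hirr : ∀ i j, ∃ m : ℕ, 1 ≤ m ∧ 0 < (A ^ m) i j)
    (c : ℝ) (hc : 0 ≤ c) (u : Fin n → ℝ) (hu0 : ∀ i, 0 ≤ u i) (hune : ∃ i, 0 < u i)
    (hcu : ∀ i, c * u i ≤ ∑ j, A j i * u j) :
    ∃ v : Fin n → ℝ, (∀ i, 0 < v i) ∧ ∀ i, c * v i ≤ ∑ j, A j i * v j := by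
  classical
  set T : Matrix (Fin n) (Fin n) ℝ := A.transpose with hT
  have hT0 : ∀ i j, 0 ≤ T i j := fun i j => hA j i
  -- powers of T are entrywise nonnegative
  have hTk : ∀ k : ℕ, ∀ i j, 0 ≤ (T ^ k) i j := by
    intro k
    induction k with
    | zero => intro i j; simp [Matrix.one_apply]; positivity
    | succ k ih =>
      intro i j
      rw [pow_succ, Matrix.mul_apply]
      exact Finset.sum_nonneg fun l _ => mul_nonneg (ih i l) (hT0 l j)
  -- choose exponents and a common bound
  let m : Fin n → Fin n → ℕ := fun i j => (hirr j i).choose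
  have hm : ∀ i j, 1 ≤ m i j ∧ 0 < (A ^ m i j) j i := fun i j => (hirr j i).choose_spec
  let M0 : ℕ := Finset.univ.sup (fun i => Finset.univ.sup (fun j => m i j))
  have hmM0 : ∀ i j, m i j ≤ M0 := by
    intro i j
    exact le_trans (Finset.le_sup (f := fun j => m i j) (Finset.mem_univ j))
      (Finset.le_sup (f := fun i => Finset.univ.sup (fun j => m i j)) (Finset.mem_univ i))
  set Q : Matrix (Fin n) (Fin n) ℝ := ∑ k ∈ Finset.range (M0 + 1), T ^ k with hQ
  have hQ0 : ∀ i j, 0 ≤ Q i j := by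
    intro i j
    rw [hQ, Matrix.sum_apply]
    exact Finset.sum_nonneg fun k _ => hTk k i j
  have hTmA : ∀ k i j, (T ^ k) i j = (A ^ k) j i := by
    intro k i j
    rw [hT, ← Matrix.transpose_pow]
    rfl
  have hQpos : ∀ i j, 0 < Q i j := by
    intro i j
    rw [hQ, Matrix.sum_apply]
    refine Finset.sum_pos' (fun k _ => hTk k i j) ⟨m i j, ?_, ?_⟩
    · exact Finset.mem_range.mpr (Nat.lt_succ_of_le (hmM0 i j))
    · rw [hTmA]; exact (hm i j).2
  have hcomm : T * Q = Q * T := by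
    rw [hQ, Finset.mul_sum, Finset.sum_mul]
    congr 1
    ext k
    rw [← pow_succ, ← pow_succ']
  refine ⟨Q.mulVec u, ?_, ?_⟩
  · intro i
    obtain ⟨j0, hj0⟩ := hune
    have : Q.mulVec u i = ∑ j, Q i j * u j := rfl
    rw [this]
    refine Finset.sum_pos' (fun j _ => mul_nonneg (hQ0 i j) (hu0 j)) ⟨j0, Finset.mem_univ j0, mul_pos (hQpos i j0) hj0⟩
  · intro i
    have hsum : ∑ j, A j i * Q.mulVec u j = T.mulVec (Q.mulVec u) i := by
      simp [Matrix.mulVec, dotProduct, hT, Matrix.transpose_apply]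
    rw [hsum, Matrix.mulVec_mulVec, hcomm, ← Matrix.mulVec_mulVec]
    -- goal : c * Q.mulVec u i ≤ Q.mulVec (T.mulVec u) i
    have h1 : ∀ j, c * u j ≤ T.mulVec u j := by
      intro j
      have : T.mulVec u j = ∑ l, A l j * u l := by
        simp [Matrix.mulVec, dotProduct, hT, Matrix.transpose_apply]
      rw [this]; exact hcu j
    have h2 : Q.mulVec (fun j => c * u j) i ≤ Q.mulVec (T.mulVec u) i := by
      have e1 : Q.mulVec (fun j => c * u j) i = ∑ j, Q i j * (c * u j) := rfl
      have e2 : Q.mulVec (T.mulVec u) i = ∑ j, Q i j * (T.mulVec u j) := rfl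
      rw [e1, e2]
      exact Finset.sum_le_sum fun j _ => mul_le_mul_of_nonneg_left (h1 j) (hQ0 i j)
    refine le_trans (le_of_eq ?_) h2
    have e1 : Q.mulVec (fun j => c * u j) i = ∑ j, Q i j * (c * u j) := rfl
    have e2 : Q.mulVec u i = ∑ j, Q i j * u j := rfl
    rw [e1, e2, Finset.mul_sum]
    congr 1; ext j; ring

private lemma SIS_exists' (n : ℕ) (hn : 1 ≤ n) (A : Matrix (Fin n) (Fin n) ℝ)
    (hA : ∀ i j, 0 ≤ A i j) (β δ : ℝ) (hβ : 0 < β) (hδ : 0 < δ)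
    (c : ℝ) (hc : δ < β * c)
    (v : Fin n → ℝ) (hv : ∀ i, 0 < v i)
    (hsub : ∀ i, c * v i ≤ ∑ j, A j i * v j) :
    ∃ xs : Fin n → ℝ, (∀ i, xs i ∈ Set.Ioo (0:ℝ) 1) ∧
      ∀ i, δ * xs i = (1 - xs i) * β * ∑ j, A j i * xs j := by
  have hβc : 0 < β * c := lt_trans hδ hc
  have hc0 : 0 < c := by
    by_contra h
    push_neg at h
    nlinarith [mul_nonpos_of_nonneg_of_nonpos hβ.le h]
  set K : ℝ := min ((β * c - δ) / (β * c)) (1 / 2) with hKdef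
  have hK0 : 0 < K := lt_min (div_pos (by linarith) hβc) one_half_pos
  have i₀ : Fin n := ⟨0, hn⟩
  have hne : (Finset.univ : Finset (Fin n)).Nonempty := ⟨i₀, Finset.mem_univ _⟩
  set Vm : ℝ := Finset.univ.sup' hne v with hVmdef
  have hVm : ∀ i, v i ≤ Vm := fun i => Finset.le_sup' v (Finset.mem_univ i)
  have hVm0 : 0 < Vm := lt_of_lt_of_le (hv i₀) (hVm i₀)
  set ε : ℝ := K / Vm with hεdef
  have hε0 : 0 < ε := div_pos hK0 hVm0
  have hεvK : ∀ i, ε * v i ≤ K := by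
    intro i
    calc ε * v i ≤ ε * Vm := mul_le_mul_of_nonneg_left (hVm i) hε0.le
      _ = K := div_mul_cancel₀ K hVm0.ne'
  have hεv0 : ∀ i, 0 < ε * v i := fun i => mul_pos hε0 (hv i)
  have hεv1 : ∀ i, ε * v i ≤ 1 := fun i =>
    le_trans (hεvK i) (le_trans (min_le_right _ _) (by norm_num))
  set S : Set (Fin n → ℝ) := {x | (∀ i, ε * v i ≤ x i) ∧ (∀ i, x i ≤ 1) ∧
    ∀ i, x i ≤ β * (∑ j, A j i * x j) / (δ + β * (∑ j, A j i * x j))} with hSdef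
  -- key: anything above ε•v maps above ε•v
  have hlow : ∀ x : Fin n → ℝ, (∀ i, ε * v i ≤ x i) →
      ∀ i, ε * v i ≤ β * (∑ j, A j i * x j) / (δ + β * (∑ j, A j i * x j)) := by
    intro x hx i
    have h1 : ε * (c * v i) ≤ ∑ j, A j i * x j := by
      calc ε * (c * v i) ≤ ε * (∑ j, A j i * v j) :=
            mul_le_mul_of_nonneg_left (hsub i) hε0.le
        _ = ∑ j, A j i * (ε * v j) := by
            rw [Finset.mul_sum]; exact Finset.sum_congr rfl fun j _ => by ring
        _ ≤ ∑ j, A j i * x j :=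
            Finset.sum_le_sum fun j _ => mul_le_mul_of_nonneg_left (hx j) (hA j i)
    have h2 : (0:ℝ) ≤ ε * (c * v i) := (mul_pos hε0 (mul_pos hc0 (hv i))).le
    refine le_trans ?_ (SIS_g_mono' hβ hδ h2 h1)
    rw [le_div_iff₀ (by nlinarith : (0:ℝ) < δ + β * (ε * (c * v i)))]
    have h4 : ε * v i ≤ (β * c - δ) / (β * c) := le_trans (hεvK i) (min_le_left _ _)
    have h3 : ε * v i * (β * c) ≤ β * c - δ := (le_div_iff₀ hβc).mp h4
    nlinarith [mul_le_mul_of_nonneg_left h3 (hεv0 i).le]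
  have hSne : (fun i => ε * v i) ∈ S := by
    refine ⟨fun i => le_refl _, hεv1, hlow _ (fun i => le_refl _)⟩
  set xs : Fin n → ℝ := fun i => sSup ((fun x => x i) '' S) with hxsdef
  have hbdd : ∀ i, BddAbove ((fun x => x i) '' S) := by
    intro i
    exact ⟨1, by rintro y ⟨x, hx, rfl⟩; exact hx.2.1 i⟩
  have hmemle : ∀ x ∈ S, ∀ i, x i ≤ xs i := fun x hx i => le_csSup (hbdd i) ⟨x, hx, rfl⟩
  have hub : ∀ (i : Fin n) (b : ℝ), (∀ x ∈ S, x i ≤ b) → xs i ≤ b := by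
    intro i b hb
    refine csSup_le ⟨_, ⟨_, hSne, rfl⟩⟩ ?_
    rintro y ⟨x, hx, rfl⟩
    exact hb x hx
  have hxs_lb : ∀ i, ε * v i ≤ xs i := fun i => hmemle _ hSne i
  have hxs0 : ∀ i, 0 ≤ xs i := fun i => le_trans (hεv0 i).le (hxs_lb i)
  have hsxs0 : ∀ i, 0 ≤ ∑ j, A j i * xs j :=
    fun i => Finset.sum_nonneg fun j _ => mul_nonneg (hA j i) (hxs0 j)
  have claim1 : ∀ i, xs i ≤ β * (∑ j, A j i * xs j) / (δ + β * (∑ j, A j i * xs j)) := by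
    intro i
    refine hub i _ ?_
    intro x hx
    have hx0 : ∀ j, 0 ≤ x j := fun j => le_trans (hεv0 j).le (hx.1 j)
    have hsx0 : 0 ≤ ∑ j, A j i * x j :=
      Finset.sum_nonneg fun j _ => mul_nonneg (hA j i) (hx0 j)
    have hsle : ∑ j, A j i * x j ≤ ∑ j, A j i * xs j :=
      Finset.sum_le_sum fun j _ => mul_le_mul_of_nonneg_left (hmemle x hx j) (hA j i)
    exact le_trans (hx.2.2 i) (SIS_g_mono' hβ hδ hsx0 hsle)
  set y : Fin n → ℝ := fun i => β * (∑ j, A j i * xs j) / (δ + β * (∑ j, A j i * xs j))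
    with hydef
  have hyS : y ∈ S := by
    refine ⟨hlow xs hxs_lb, fun i => (SIS_g_lt_one' hβ hδ (hsxs0 i)).le, ?_⟩
    intro i
    have hsle : ∑ j, A j i * xs j ≤ ∑ j, A j i * y j :=
      Finset.sum_le_sum fun j _ => mul_le_mul_of_nonneg_left (claim1 j) (hA j i)
    exact SIS_g_mono' hβ hδ (hsxs0 i) hsle
  have hfix : ∀ i, xs i = β * (∑ j, A j i * xs j) / (δ + β * (∑ j, A j i * xs j)) :=
    fun i => le_antisymm (claim1 i) (hmemle y hyS i)
  refine ⟨xs, fun i => ⟨lt_of_lt_of_le (hεv0 i) (hxs_lb i), ?_⟩,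
    fun i => (SIS_eq_iff' hβ hδ (hsxs0 i)).mpr (hfix i)⟩
  rw [hfix i]
  exact SIS_g_lt_one' hβ hδ (hsxs0 i)

/-- Endemic equilibrium of the SIS model above the epidemic threshold (Theorem 9.2,
existence and uniqueness part): if the nonnegative matrix `A` is irreducible and
`β · ρ(A) > δ` (with `ρ(A)` the spectral radius of `A`), then there is a unique
vector `x*` with `0 < x*_i < 1` for all `i` satisfying the endemic equilibrium
equations `δ x*_i = (1 - x*_i) β Σ_j A_{ji} x*_j`. -/
theorem SIS_endemic_equilibrium
    (n : ℕ) (hn : 1 ≤ n)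
    (A : Matrix (Fin n) (Fin n) ℝ)
    (hA : ∀ i j, 0 ≤ A i j)
    (hirr : ∀ i j, ∃ m : ℕ, 1 ≤ m ∧ 0 < (A ^ m) i j)
    (β δ : ℝ) (hβ : 0 < β) (hδ : 0 < δ)
    (hthr : ENNReal.ofReal δ
      < ENNReal.ofReal β * spectralRadius ℂ (A.map Complex.ofReal)) :
    ∃! xstar : Fin n → ℝ,
      (∀ i, xstar i ∈ Set.Ioo (0 : ℝ) 1) ∧
      ∀ i, δ * xstar i = (1 - xstar i) * β * ∑ j, A j i * xstar j := by
  classical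
  -- Step 1: extract an eigenvalue with `δ < β * ‖lam‖`
  obtain ⟨lam, hmem, hlam⟩ : ∃ lam ∈ spectrum ℂ (A.map Complex.ofReal), δ < β * ‖lam‖ := by
    by_contra h
    push_neg at h
    have hsr : spectralRadius ℂ (A.map Complex.ofReal) ≤ ENNReal.ofReal (δ / β) := by
      rw [spectralRadius]
      refine iSup₂_le fun k hk => ?_
      rw [show ((‖k‖₊ : ENNReal)) = ENNReal.ofReal ‖k‖ from (ENNReal.ofReal_eq_coe_nnreal (norm_nonneg k)).symm]
      refine ENNReal.ofReal_le_ofReal ?_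
      rw [le_div_iff₀ hβ]
      have := h k hk
      linarith
    have h2 : ENNReal.ofReal β * spectralRadius ℂ (A.map Complex.ofReal)
        ≤ ENNReal.ofReal β * ENNReal.ofReal (δ / β) := mul_le_mul_right hsr _
    rw [← ENNReal.ofReal_mul hβ.le] at h2
    have h3 : β * (δ / β) = δ := by field_simp
    rw [h3] at h2
    exact absurd (lt_of_lt_of_le hthr h2) (lt_irrefl _)
  -- Step 2: an eigenvector of the transposed (complexified) matrix
  obtain ⟨w, hw0, hw⟩ : ∃ w : Fin n → ℂ, w ≠ 0 ∧
      (A.map Complex.ofReal).transpose.mulVec w = lam • w := by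
    set M := A.map Complex.ofReal with hM
    have h1 : ¬ IsUnit ((algebraMap ℂ (Matrix (Fin n) (Fin n) ℂ)) lam - M) :=
      spectrum.mem_iff.mp hmem
    have h2 : ((algebraMap ℂ (Matrix (Fin n) (Fin n) ℂ)) lam - M).det = 0 := by
      by_contra hd
      exact h1 ((Matrix.isUnit_iff_isUnit_det _).mpr (isUnit_iff_ne_zero.mpr hd))
    have h3 : ((algebraMap ℂ (Matrix (Fin n) (Fin n) ℂ)) lam - M.transpose).det = 0 := by
      rw [← Matrix.det_transpose, Matrix.transpose_sub]
      have halgt : ((algebraMap ℂ (Matrix (Fin n) (Fin n) ℂ)) lam).transpose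
          = (algebraMap ℂ (Matrix (Fin n) (Fin n) ℂ)) lam := by
        simp [Matrix.algebraMap_eq_diagonal]
      rw [Matrix.transpose_transpose, halgt]
      exact h2
    obtain ⟨w, hw0, hw⟩ := Matrix.exists_mulVec_eq_zero_iff.mpr h3
    refine ⟨w, hw0, ?_⟩
    rw [Matrix.sub_mulVec] at hw
    have halg : ((algebraMap ℂ (Matrix (Fin n) (Fin n) ℂ)) lam).mulVec w = lam • w := by
      funext i
      simp [Matrix.algebraMap_eq_diagonal, Matrix.mulVec_diagonal]
    rw [halg] at hw
    exact (sub_eq_zero.mp hw).symm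
  -- Step 3: the vector of absolute values is a nonnegative subsolution
  have hune : ∃ i, 0 < ‖w i‖ := by
    obtain ⟨i, hi⟩ := Function.ne_iff.mp hw0
    exact ⟨i, norm_pos_iff.mpr hi⟩
  have hcu : ∀ i, ‖lam‖ * ‖w i‖ ≤ ∑ j, A j i * ‖w j‖ := by
    intro i
    have h1 : ∑ j, (A j i : ℂ) * w j = lam * w i := by
      have := congrFun hw i
      simpa [Matrix.mulVec, dotProduct, Matrix.transpose_apply, Matrix.map_apply] using this
    calc ‖lam‖ * ‖w i‖ = ‖lam * w i‖ := (norm_mul _ _).symm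
      _ = ‖∑ j, (A j i : ℂ) * w j‖ := by rw [h1]
      _ ≤ ∑ j, ‖(A j i : ℂ) * w j‖ := norm_sum_le _ _
      _ = ∑ j, A j i * ‖w j‖ := by
          refine Finset.sum_congr rfl fun j _ => ?_
          rw [norm_mul, Complex.norm_real, Real.norm_eq_abs, abs_of_nonneg (hA j i)]
  -- Step 4: amplify to a strictly positive subsolution, then existence
  obtain ⟨v, hv, hsub⟩ := SIS_amplify n A hA hirr ‖lam‖ (norm_nonneg lam)
    (fun i => ‖w i‖) (fun i => norm_nonneg _) hune hcu
  obtain ⟨xs, hxs1, hxs2⟩ := SIS_exists' n hn A hA β δ hβ hδ ‖lam‖ hlam v hv hsub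
  -- Step 5: uniqueness
  refine ⟨xs, ⟨hxs1, hxs2⟩, ?_⟩
  rintro z ⟨hz1, hz2⟩
  funext i
  exact le_antisymm (SIS_le' n hn A hA β δ hβ hδ z xs hz1 hz2 hxs1 hxs2 i)
    (SIS_le' n hn A hA β δ hβ hδ xs z hxs1 hxs2 hz1 hz2 i)
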